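/- Let C be a coaugmented coassociative counital coalgebra over a field k. Then the set Nilp C = ⋃_{m≥1} ker(C → C_+^{⊗(m+1)}), where C_+ = C/k and the maps are induced by iterated comultiplication, is a subcoalgebra of C, and it is the maximal conilpotent subcoalgebra of C. -/

import Mathlib

open TensorProduct

noncomputable section

/-- The image of the coaugmentation `k → C`, i.e. the line spanned by the coaugmentation
point `g` (the image of `1 ∈ k`). -/
def Caug (k : Type) [Field k] (C : Type) [AddCommGroup C] [Module k C] (g : C) :
    Submodule k C := Submodule.span k {g}

/-- The tensor powers `C₊^{⊗(m+1)}` of the coaugmentation cokernel `C₊ = C/k`. -/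
def Tp (k : Type) [Field k] (C : Type) [AddCommGroup C] [Module k C] (g : C) :
    ℕ → ModuleCat k
  | 0 => ModuleCat.of k (C ⧸ Caug k C g)
  | m + 1 => ModuleCat.of k ((C ⧸ Caug k C g) ⊗[k] (Tp k C g m))

/-- The iterated comultiplication map `C → C₊^{⊗(m+1)}` of a coaugmented coalgebra. -/
def Phi (k : Type) [Field k] (C : Type) [AddCommGroup C] [Module k C] [Coalgebra k C]
    (g : C) : ∀ m : ℕ, C →ₗ[k] Tp k C g m
  | 0 => (Caug k C g).mkQ
  | m + 1 => (TensorProduct.map (Caug k C g).mkQ (Phi k C g m)).comp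
      (Coalgebra.comul (R := k))

/-- `Nilp C = ⋃_{m} ker (C → C₊^{⊗(m+1)})`. -/
def Nilp (k : Type) [Field k] (C : Type) [AddCommGroup C] [Module k C] [Coalgebra k C]
    (g : C) : Submodule k C := ⨆ m : ℕ, LinearMap.ker (Phi k C g m)

section Aux

variable {k : Type} [Field k] {V W X Y : Type}
  [AddCommGroup V] [Module k V] [AddCommGroup W] [Module k W]
  [AddCommGroup X] [Module k X] [AddCommGroup Y] [Module k Y]

lemma range_rTensor_le_aux (A : Submodule k V) :
    LinearMap.range (LinearMap.rTensor W A.subtype) ≤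
      Submodule.map₂ (TensorProduct.mk k V W) A ⊤ := by
  rintro _ ⟨t, rfl⟩
  induction t with
  | zero => simp
  | tmul a w =>
      rw [LinearMap.rTensor_tmul]
      exact Submodule.apply_mem_map₂ _ a.2 Submodule.mem_top
  | add x y hx hy => rw [map_add]; exact add_mem hx hy

lemma range_lTensor_le_aux (B : Submodule k W) :
    LinearMap.range (LinearMap.lTensor V B.subtype) ≤
      Submodule.map₂ (TensorProduct.mk k V W) ⊤ B := by
  rintro _ ⟨t, rfl⟩
  induction t with
  | zero => simp
  | tmul v b =>
      rw [LinearMap.lTensor_tmul]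
      exact Submodule.apply_mem_map₂ _ Submodule.mem_top b.2
  | add x y hx hy => rw [map_add]; exact add_mem hx hy

lemma ker_map_le_aux (f : V →ₗ[k] X) (h : W →ₗ[k] Y) :
    LinearMap.ker (TensorProduct.map f h) ≤
      Submodule.map₂ (TensorProduct.mk k V W) (LinearMap.ker f) ⊤ ⊔
      Submodule.map₂ (TensorProduct.mk k V W) ⊤ (LinearMap.ker h) := by
  intro t ht
  rw [LinearMap.mem_ker] at ht
  set A := LinearMap.ker f with hA
  set B := LinearMap.ker h with hB
  have hinj1 : Function.Injective (A.liftQ f le_rfl) := by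
    rw [← LinearMap.ker_eq_bot]; exact Submodule.ker_liftQ_eq_bot _ _ _ le_rfl
  have hinj2 : Function.Injective (B.liftQ h le_rfl) := by
    rw [← LinearMap.ker_eq_bot]; exact Submodule.ker_liftQ_eq_bot _ _ _ le_rfl
  have hinj : Function.Injective
      (TensorProduct.map (A.liftQ f le_rfl) (B.liftQ h le_rfl)) := by
    rw [← LinearMap.lTensor_comp_rTensor]
    exact (Module.Flat.lTensor_preserves_injective_linearMap _ hinj2).comp
      (Module.Flat.rTensor_preserves_injective_linearMap _ hinj1)
  have h0 : TensorProduct.map A.mkQ B.mkQ t = 0 := by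
    apply hinj
    rw [map_zero, ← LinearMap.comp_apply, ← TensorProduct.map_comp,
      Submodule.liftQ_mkQ, Submodule.liftQ_mkQ]
    exact ht
  have h1 : LinearMap.lTensor (V ⧸ A) B.mkQ (LinearMap.rTensor W A.mkQ t) = 0 := by
    rw [← LinearMap.comp_apply, LinearMap.lTensor_comp_rTensor]
    exact h0
  rw [← LinearMap.mem_ker, lTensor_mkQ] at h1
  obtain ⟨s, hs⟩ := h1
  obtain ⟨s', rfl⟩ := LinearMap.rTensor_surjective (↥B) (Submodule.mkQ_surjective A) s
  have hcomm : LinearMap.lTensor (V ⧸ A) B.subtype (LinearMap.rTensor (↥B) A.mkQ s')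
      = LinearMap.rTensor W A.mkQ (LinearMap.lTensor V B.subtype s') := by
    rw [← LinearMap.comp_apply, ← LinearMap.comp_apply,
      LinearMap.lTensor_comp_rTensor, LinearMap.rTensor_comp_lTensor]
  rw [hcomm] at hs
  have h2 : LinearMap.rTensor W A.mkQ (t - LinearMap.lTensor V B.subtype s') = 0 := by
    rw [map_sub, hs, sub_self]
  rw [← LinearMap.mem_ker, rTensor_mkQ] at h2
  obtain ⟨s'', hs''⟩ := h2
  have ht' : t = LinearMap.rTensor W A.subtype s'' + LinearMap.lTensor V B.subtype s' := by
    rw [hs'']; abel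
  rw [ht']
  exact add_mem (Submodule.mem_sup_left (range_rTensor_le_aux A ⟨s'', rfl⟩))
    (Submodule.mem_sup_right (range_lTensor_le_aux B ⟨s', rfl⟩))

lemma map₂_le_ker_aux (f : V →ₗ[k] X) (h : W →ₗ[k] Y) (A : Submodule k V) (B : Submodule k W)
    (hA : A ≤ LinearMap.ker f) (hB : B ≤ LinearMap.ker h) :
    Submodule.map₂ (TensorProduct.mk k V W) A ⊤ ⊔ Submodule.map₂ (TensorProduct.mk k V W) ⊤ B ≤
      LinearMap.ker (TensorProduct.map f h) := by
  apply sup_le <;> rw [Submodule.map₂_le] <;> intro a ha b hb <;>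
    simp only [LinearMap.mem_ker, TensorProduct.mk_apply, TensorProduct.map_tmul]
  · rw [show f a = 0 from hA ha, zero_tmul]
  · rw [show h b = 0 from hB hb, tmul_zero]

lemma map_map₂_le_aux (f : V →ₗ[k] X) (h : W →ₗ[k] Y) (A : Submodule k V) (B : Submodule k W) :
    Submodule.map (TensorProduct.map f h) (Submodule.map₂ (TensorProduct.mk k V W) A B) ≤
      Submodule.map₂ (TensorProduct.mk k X Y) (A.map f) (B.map h) := by
  rw [Submodule.map_le_iff_le_comap, Submodule.map₂_le]
  intro a ha b hb
  simp only [Submodule.mem_comap, TensorProduct.mk_apply, TensorProduct.map_tmul]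
  exact Submodule.apply_mem_map₂ _ ⟨a, ha, rfl⟩ ⟨b, hb, rfl⟩

lemma rTensor_fix_aux {A : Submodule k V} {π : V →ₗ[k] V} (hπ : ∀ a ∈ A, π a = a)
    {t : V ⊗[k] W} (ht : t ∈ Submodule.map₂ (TensorProduct.mk k V W) A ⊤) :
    LinearMap.rTensor W π t = t := by
  have hle : Submodule.map₂ (TensorProduct.mk k V W) A ⊤ ≤
      LinearMap.ker (LinearMap.rTensor W π - LinearMap.id) := by
    rw [Submodule.map₂_le]
    intro a ha b _
    simp [hπ a ha]
  have h2 := hle ht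
  rw [LinearMap.mem_ker, LinearMap.sub_apply, sub_eq_zero] at h2
  simpa using h2

end Aux

section Main

variable (k C : Type) [Field k] [AddCommGroup C] [Module k C] [Coalgebra k C] (g : C)

lemma Phi_zero_apply (c : C) : Phi k C g 0 c = (Caug k C g).mkQ c := rfl

lemma Phi_succ_apply (m : ℕ) (c : C) :
    Phi k C g (m + 1) c =
      TensorProduct.map (Caug k C g).mkQ (Phi k C g m) (Coalgebra.comul (R := k) c) := rfl

lemma Phi_g_zero (hg1 : Coalgebra.comul (R := k) g = g ⊗ₜ[k] g) :
    ∀ m, Phi k C g m g = 0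
  | 0 => by
      rw [Phi_zero_apply, Submodule.mkQ_apply]
      exact (Submodule.Quotient.mk_eq_zero (p := Caug k C g)).mpr (Submodule.mem_span_singleton_self g)
  | m + 1 => by
      rw [Phi_succ_apply, hg1, TensorProduct.map_tmul, Phi_g_zero hg1 m, tmul_zero]; rfl

/-- Reassociation map `C₊^{⊗(m+1)} ⊗ C₊ → C₊^{⊗(m+2)}`. -/
def alphaMap : ∀ m : ℕ, (Tp k C g m ⊗[k] (C ⧸ Caug k C g)) →ₗ[k] Tp k C g (m + 1)
  | 0 => LinearMap.id
  | m + 1 => (LinearMap.lTensor (C ⧸ Caug k C g) (alphaMap m)).comp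
      (TensorProduct.assoc k (C ⧸ Caug k C g) (Tp k C g m) (C ⧸ Caug k C g)).toLinearMap

lemma alphaMap_injective : ∀ m, Function.Injective (alphaMap k C g m)
  | 0 => fun a b hab => hab
  | m + 1 => by
      have hin : Function.Injective (LinearMap.lTensor (C ⧸ Caug k C g) (alphaMap k C g m)) :=
        Module.Flat.lTensor_preserves_injective_linearMap _ (alphaMap_injective m)
      exact fun a b hab => (TensorProduct.assoc k _ _ _).injective (hin hab)

lemma Phi_succ_eq (m : ℕ) : ∀ c : C,
    Phi k C g (m + 1) c = alphaMap k C g m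
      (TensorProduct.map (Phi k C g m) (Caug k C g).mkQ (Coalgebra.comul (R := k) c)) := by
  induction m with
  | zero => intro c; rfl
  | succ m ih =>
      intro c
      have hΦ : Phi k C g (m + 1) =
          (alphaMap k C g m).comp
            ((TensorProduct.map (Phi k C g m) (Caug k C g).mkQ).comp
              (Coalgebra.comul (R := k))) := LinearMap.ext ih
      set Q := (Caug k C g).mkQ with hQ
      set D := (Coalgebra.comul (R := k) (A := C)) with hD
      set u := D c with hu
      set P := Phi k C g m with hP
      set a := alphaMap k C g m with ha
      set b := TensorProduct.map P Q with hb
      calc @id ((C ⧸ Caug k C g) ⊗[k] Tp k C g (m + 1)) (Phi k C g (m + 1 + 1) c)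
          = TensorProduct.map Q ((a.comp (b.comp D))) u := by
            rw [Phi_succ_apply, hΦ]; rfl
        _ = LinearMap.lTensor (C ⧸ Caug k C g) a (TensorProduct.map Q (b.comp D) u) :=
            (LinearMap.congr_fun (LinearMap.lTensor_comp_map (g' := a) (f := Q) (g := b.comp D)) u).symm
        _ = LinearMap.lTensor (C ⧸ Caug k C g) a
              (LinearMap.lTensor (C ⧸ Caug k C g) b (TensorProduct.map Q D u)) := by
            rw [← LinearMap.lTensor_comp_map (g' := b) (f := Q) (g := D)]; rfl
        _ = LinearMap.lTensor (C ⧸ Caug k C g) a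
              (LinearMap.lTensor (C ⧸ Caug k C g) b
                (LinearMap.rTensor (C ⊗[k] C) Q (LinearMap.lTensor C D u))) := by
            rw [← LinearMap.rTensor_comp_lTensor (f := Q) (g := D)]; rfl
        _ = LinearMap.lTensor (C ⧸ Caug k C g) a
              (LinearMap.lTensor (C ⧸ Caug k C g) b
                (LinearMap.rTensor (C ⊗[k] C) Q
                  (TensorProduct.assoc k C C C (LinearMap.rTensor C D u)))) := by
            rw [hu, Coalgebra.coassoc_apply]
        _ = LinearMap.lTensor (C ⧸ Caug k C g) a
              (TensorProduct.map Q b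
                (TensorProduct.assoc k C C C (LinearMap.rTensor C D u))) := by
            rw [← LinearMap.lTensor_comp_rTensor (f := Q) (g := b)]; rfl
        _ = LinearMap.lTensor (C ⧸ Caug k C g) a
              ((TensorProduct.assoc k (C ⧸ Caug k C g) (Tp k C g m) (C ⧸ Caug k C g))
                (TensorProduct.map (TensorProduct.map Q P) Q (LinearMap.rTensor C D u))) := by
            rw [TensorProduct.map_map_assoc]
        _ = LinearMap.lTensor (C ⧸ Caug k C g) a
              ((TensorProduct.assoc k (C ⧸ Caug k C g) (Tp k C g m) (C ⧸ Caug k C g))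
                (TensorProduct.map ((TensorProduct.map Q P).comp D) Q u)) := by
            rw [← LinearMap.map_comp_rTensor (f := TensorProduct.map Q P) (g := Q) (f' := D)]; rfl
        _ = @id ((C ⧸ Caug k C g) ⊗[k] Tp k C g (m + 1)) (alphaMap k C g (m + 1)
              (TensorProduct.map (Phi k C g (m + 1)) Q u)) := rfl

lemma ker_Phi_mono (hg1 : Coalgebra.comul (R := k) g = g ⊗ₜ[k] g) :
    ∀ m, LinearMap.ker (Phi k C g m) ≤ LinearMap.ker (Phi k C g (m + 1))
  | 0 => by
      intro c hc
      rw [LinearMap.mem_ker, Phi_zero_apply, Submodule.mkQ_apply] at hc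
      replace hc := (Submodule.Quotient.mk_eq_zero (p := Caug k C g)).mp hc
      obtain ⟨a, rfl⟩ := Submodule.mem_span_singleton.mp hc
      rw [LinearMap.mem_ker, map_smul, Phi_g_zero k C g hg1 1, smul_zero]
  | m + 1 => by
      intro c hc
      rw [LinearMap.mem_ker, Phi_succ_apply] at hc ⊢
      have h1 : Coalgebra.comul (R := k) c ∈
          LinearMap.ker (TensorProduct.map (Caug k C g).mkQ (Phi k C g m)) := hc
      have h2 := ker_map_le_aux (Caug k C g).mkQ (Phi k C g m) h1
      rw [Submodule.ker_mkQ] at h2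
      have h3 : Coalgebra.comul (R := k) c ∈
          Submodule.map₂ (TensorProduct.mk k C C) (Caug k C g) ⊤ ⊔
          Submodule.map₂ (TensorProduct.mk k C C) ⊤ (LinearMap.ker (Phi k C g (m + 1))) :=
        SetLike.le_def.mp (sup_le_sup_left (α := Submodule k (C ⊗[k] C))
          (Submodule.map₂_le_map₂_right (f := TensorProduct.mk k C C) (p := ⊤)
            (ker_Phi_mono hg1 m)) _) h2
      have h4 := map₂_le_ker_aux (Caug k C g).mkQ (Phi k C g (m + 1)) (Caug k C g)
        (LinearMap.ker (Phi k C g (m + 1))) (by rw [Submodule.ker_mkQ]) le_rfl h3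
      exact h4

lemma g_mem_Nilp : g ∈ Nilp k C g := by
  apply Submodule.mem_iSup_of_mem 0
  rw [LinearMap.mem_ker, Phi_zero_apply, Submodule.mkQ_apply]
  exact (Submodule.Quotient.mk_eq_zero (p := Caug k C g)).mpr (Submodule.mem_span_singleton_self g)

lemma comul_mem (hg1 : Coalgebra.comul (R := k) g = g ⊗ₜ[k] g)
    (hg2 : Coalgebra.counit (R := k) g = 1) (m : ℕ) (c : C)
    (hc : Phi k C g (m + 1) c = 0) :
    Coalgebra.comul (R := k) c ∈
      Submodule.map₂ (TensorProduct.mk k C C) (Nilp k C g) (Nilp k C g) := by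
  set q : C →ₗ[k] C :=
    (LinearMap.toSpanSingleton k C g).comp (Coalgebra.counit (R := k)) with hq
  set p : C →ₗ[k] C := LinearMap.id - q with hp
  set N := LinearMap.ker (Phi k C g m) with hN
  have hpg : ∀ a ∈ Caug k C g, p a = 0 := by
    intro a ha
    obtain ⟨r, rfl⟩ := Submodule.mem_span_singleton.mp ha
    simp [hp, hq, LinearMap.toSpanSingleton_apply, hg2]
  have hpN : ∀ a ∈ N, p a ∈ N := by
    intro a ha
    rw [hN, LinearMap.mem_ker] at ha ⊢
    rw [hp]
    simp only [LinearMap.sub_apply, LinearMap.id_apply, map_sub, ha, hq,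
      LinearMap.comp_apply, LinearMap.toSpanSingleton_apply, map_smul,
      Phi_g_zero k C g hg1 m, smul_zero, sub_zero, zero_sub, neg_zero]
  have hB : TensorProduct.map (Caug k C g).mkQ (Phi k C g m)
      (Coalgebra.comul (R := k) c) = 0 := hc
  have hA : TensorProduct.map (Phi k C g m) (Caug k C g).mkQ
      (Coalgebra.comul (R := k) c) = 0 := by
    apply alphaMap_injective k C g m
    rw [map_zero, ← Phi_succ_eq]
    exact hc
  have hB' := ker_map_le_aux (Caug k C g).mkQ (Phi k C g m) hB
  have hA' := ker_map_le_aux (Phi k C g m) (Caug k C g).mkQ hA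
  rw [Submodule.ker_mkQ] at hB' hA'
  set t := TensorProduct.map p p (Coalgebra.comul (R := k) c) with ht
  have hpmapbot : (Caug k C g).map p = ⊥ := by
    rw [eq_bot_iff]
    rintro _ ⟨a, ha, rfl⟩
    rw [Submodule.mem_bot, hpg a ha]
  have hpmapN : N.map p ≤ N := by
    rintro _ ⟨a, ha, rfl⟩
    exact hpN a ha
  have ht2 : t ∈ Submodule.map₂ (TensorProduct.mk k C C) ⊤ N := by
    have hmem : t ∈ Submodule.map (TensorProduct.map p p)
        (Submodule.map₂ (TensorProduct.mk k C C) (Caug k C g) ⊤ ⊔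
          Submodule.map₂ (TensorProduct.mk k C C) ⊤ N) := ⟨_, hB', rfl⟩
    rw [Submodule.map_sup] at hmem
    have hle : Submodule.map (TensorProduct.map p p)
          (Submodule.map₂ (TensorProduct.mk k C C) (Caug k C g) ⊤) ⊔
        Submodule.map (TensorProduct.map p p)
          (Submodule.map₂ (TensorProduct.mk k C C) ⊤ N) ≤
        Submodule.map₂ (TensorProduct.mk k C C) ⊤ N := by
      apply sup_le
      · refine le_trans (map_map₂_le_aux p p _ _) ?_
        rw [hpmapbot, Submodule.map₂_bot_left]
        exact bot_le
      · exact le_trans (map_map₂_le_aux p p _ _) (Submodule.map₂_le_map₂ le_top hpmapN)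
    exact hle hmem
  have ht1 : t ∈ Submodule.map₂ (TensorProduct.mk k C C) N ⊤ := by
    have hmem : t ∈ Submodule.map (TensorProduct.map p p)
        (Submodule.map₂ (TensorProduct.mk k C C) N ⊤ ⊔
          Submodule.map₂ (TensorProduct.mk k C C) ⊤ (Caug k C g)) := ⟨_, hA', rfl⟩
    rw [Submodule.map_sup] at hmem
    have hle : Submodule.map (TensorProduct.map p p)
          (Submodule.map₂ (TensorProduct.mk k C C) N ⊤) ⊔
        Submodule.map (TensorProduct.map p p)
          (Submodule.map₂ (TensorProduct.mk k C C) ⊤ (Caug k C g)) ≤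
        Submodule.map₂ (TensorProduct.mk k C C) N ⊤ := by
      apply sup_le
      · exact le_trans (map_map₂_le_aux p p _ _) (Submodule.map₂_le_map₂ hpmapN le_top)
      · refine le_trans (map_map₂_le_aux p p _ _) ?_
        rw [hpmapbot, Submodule.map₂_bot_right]
        exact bot_le
    exact hle hmem
  -- intersection: t ∈ N ⊗ N
  obtain ⟨N', hN'⟩ := Submodule.exists_isCompl N
  set π : C →ₗ[k] C := N.subtype ∘ₗ N.linearProjOfIsCompl N' hN' with hπ
  have hπfix : ∀ a ∈ N, π a = a := by
    intro a ha
    have h := Submodule.linearProjOfIsCompl_apply_left hN' ⟨a, ha⟩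
    rw [hπ, LinearMap.comp_apply]
    exact congrArg Subtype.val h
  have hts : t ∈ Submodule.map₂ (TensorProduct.mk k C C) N N := by
    have hfix := rTensor_fix_aux hπfix ht1
    rw [← hfix]
    have hmem : LinearMap.rTensor C π t ∈ Submodule.map (TensorProduct.map π LinearMap.id)
        (Submodule.map₂ (TensorProduct.mk k C C) ⊤ N) := ⟨t, ht2, rfl⟩
    refine le_trans (map_map₂_le_aux π LinearMap.id _ _)
      (Submodule.map₂_le_map₂ ?_ ?_) hmem
    · rintro _ ⟨x, -, rfl⟩
      exact Submodule.coe_mem (N.linearProjOfIsCompl N' hN' x)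
    · rw [Submodule.map_id]
  -- decomposition of comul c
  have e1 : LinearMap.rTensor C q (Coalgebra.comul (R := k) c) = g ⊗ₜ[k] c := by
    rw [hq, LinearMap.rTensor_comp, LinearMap.comp_apply, Coalgebra.rTensor_counit_comul,
      LinearMap.rTensor_tmul, LinearMap.toSpanSingleton_apply, one_smul]
  have e2 : LinearMap.lTensor C q (Coalgebra.comul (R := k) c) = c ⊗ₜ[k] g := by
    rw [hq, LinearMap.lTensor_comp, LinearMap.comp_apply, Coalgebra.lTensor_counit_comul,
      LinearMap.lTensor_tmul, LinearMap.toSpanSingleton_apply, one_smul]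
  have e3 : LinearMap.lTensor C q (g ⊗ₜ[k] c) =
      g ⊗ₜ[k] ((Coalgebra.counit (R := k) c) • g) := by
    rw [LinearMap.lTensor_tmul, hq, LinearMap.comp_apply, LinearMap.toSpanSingleton_apply]
  have hdecomp : t = Coalgebra.comul (R := k) c - g ⊗ₜ[k] c - c ⊗ₜ[k] g
      + g ⊗ₜ[k] ((Coalgebra.counit (R := k) c) • g) := by
    have hmm0 := LinearMap.congr_fun
      (LinearMap.lTensor_comp_rTensor (f := p) (g := p)) (Coalgebra.comul (R := k) c)
    rw [LinearMap.comp_apply] at hmm0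
    rw [ht, ← hmm0, hp, LinearMap.rTensor_sub, LinearMap.lTensor_sub, LinearMap.rTensor_id,
      LinearMap.lTensor_id]
    simp only [LinearMap.sub_apply, LinearMap.id_apply, map_sub]
    rw [e1, e2, e3]
    abel
  have hgN : g ∈ Nilp k C g := g_mem_Nilp k C g
  have hcN : c ∈ Nilp k C g :=
    Submodule.mem_iSup_of_mem (m + 1) (LinearMap.mem_ker.mpr hc)
  have htN : t ∈ Submodule.map₂ (TensorProduct.mk k C C) (Nilp k C g) (Nilp k C g) :=
    Submodule.map₂_le_map₂ (le_iSup _ m) (le_iSup _ m) hts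
  have hfinal : Coalgebra.comul (R := k) c = t + g ⊗ₜ[k] c + c ⊗ₜ[k] g
      - g ⊗ₜ[k] ((Coalgebra.counit (R := k) c) • g) := by
    rw [hdecomp]; abel
  rw [hfinal]
  exact sub_mem
    (add_mem (add_mem htN (Submodule.apply_mem_map₂ _ hgN hcN))
      (Submodule.apply_mem_map₂ _ hcN hgN))
    (Submodule.apply_mem_map₂ _ hgN (Submodule.smul_mem _ _ hgN))

end Main

/-- For a coaugmented coassociative counital coalgebra `C` over a field `k` (with
coaugmentation point `g`, a grouplike element), the subspace
`Nilp C = ⋃_{m ≥ 1} ker (C → C₊^{⊗(m+1)})` is a subcoalgebra of `C` (it contains the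
coaugmentation and is carried by the comultiplication into `Nilp C ⊗ Nilp C ⊆ C ⊗ C`),
it is conilpotent (each of its elements is annihilated by some iterated comultiplication
map `C → C₊^{⊗(m+1)}`), and it is the maximal such subcoalgebra: it contains every
conilpotent subcoalgebra of `C`. -/
theorem stmt_6 (k C : Type) [Field k] [AddCommGroup C] [Module k C] [Coalgebra k C]
    (g : C) (hg1 : Coalgebra.comul (R := k) g = g ⊗ₜ[k] g)
    (hg2 : Coalgebra.counit (R := k) g = 1) :
    g ∈ Nilp k C g ∧
    Submodule.map (Coalgebra.comul (R := k) (A := C)) (Nilp k C g) ≤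
      Submodule.map₂ (TensorProduct.mk k C C) (Nilp k C g) (Nilp k C g) ∧
    (∀ c ∈ Nilp k C g, ∃ m, Phi k C g m c = 0) ∧
    (∀ D : Submodule k C, g ∈ D →
      Submodule.map (Coalgebra.comul (R := k) (A := C)) D ≤
        Submodule.map₂ (TensorProduct.mk k C C) D D →
      (∀ c ∈ D, ∃ m, Phi k C g m c = 0) → D ≤ Nilp k C g) := by
  refine ⟨g_mem_Nilp k C g, ?_, ?_, ?_⟩
  · have hmap : Submodule.map (Coalgebra.comul (R := k) (A := C)) (Nilp k C g) =
        ⨆ m : ℕ, Submodule.map (Coalgebra.comul (R := k) (A := C))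
          (LinearMap.ker (Phi k C g m)) := Submodule.map_iSup _ _
    rw [hmap]
    apply iSup_le
    intro m
    rintro _ ⟨c, hc, rfl⟩
    cases m with
    | zero =>
        rw [SetLike.mem_coe, LinearMap.mem_ker, Phi_zero_apply, Submodule.mkQ_apply] at hc
        replace hc := (Submodule.Quotient.mk_eq_zero (p := Caug k C g)).mp hc
        obtain ⟨a, rfl⟩ := Submodule.mem_span_singleton.mp hc
        rw [map_smul, hg1]
        exact Submodule.smul_mem _ _
          (Submodule.apply_mem_map₂ _ (g_mem_Nilp k C g) (g_mem_Nilp k C g))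
    | succ m => exact comul_mem k C g hg1 hg2 m c hc
  · intro c hc
    have hdir : Directed (· ≤ ·) (fun m : ℕ => LinearMap.ker (Phi k C g m)) :=
      (monotone_nat_of_le_succ (ker_Phi_mono k C g hg1)).directed_le
    obtain ⟨m, hm⟩ := (Submodule.mem_iSup_of_directed _ hdir).mp hc
    exact ⟨m, LinearMap.mem_ker.mp hm⟩
  · intro D _ _ hD3
    intro c hc
    obtain ⟨m, hm⟩ := hD3 c hc
    exact Submodule.mem_iSup_of_mem m (LinearMap.mem_ker.mpr hm)
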